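/- Let a_1,...,a_m ∈ ℝ[X], S := {a_1 ≥ 0,...,a_m ≥ 0} bounded, ρ > 0 with ρ − ‖X‖² strictly positive on S, and f ∈ ℝ[X] strictly positive on S. Then f belongs to the quadratic module generated by a_1,...,a_m and ρ − ‖X‖². -/

import Mathlib

open Finset MvPolynomial

/-- `p` is a sum of squares. -/
def IsSOS {d : ℕ} (p : MvPolynomial (Fin d) ℝ) : Prop :=
  ∃ (k : ℕ) (q : Fin k → MvPolynomial (Fin d) ℝ), p = ∑ j, q j ^ 2

/-- The quadratic module generated by a finite family `a : ι → ℝ[X]`. -/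
def QM {d : ℕ} {ι : Type*} [Fintype ι] (a : ι → MvPolynomial (Fin d) ℝ) :
    Set (MvPolynomial (Fin d) ℝ) :=
  {f | ∃ (σ₀ : MvPolynomial (Fin d) ℝ) (σ : ι → MvPolynomial (Fin d) ℝ),
        IsSOS σ₀ ∧ (∀ i, IsSOS (σ i)) ∧ f = σ₀ + ∑ i, σ i * a i}

/-- `‖X‖² = X₁² + ⋯ + X_d²`. -/
noncomputable def normSq (d : ℕ) : MvPolynomial (Fin d) ℝ := ∑ i : Fin d, X i ^ 2

namespace SchAux

variable {d : ℕ}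

local notation "A" => MvPolynomial (Fin d) ℝ

lemma isSOS_zero : IsSOS (0 : A) := ⟨0, (fun i => 0), by simp⟩

lemma isSOS_sq (p : A) : IsSOS (p ^ 2) := ⟨1, fun _ => p, by simp⟩

lemma isSOS_one : IsSOS (1 : A) := by simpa using isSOS_sq (1 : A)

lemma sos_add {p q : A} (hp : IsSOS p) (hq : IsSOS q) : IsSOS (p + q) := by
  obtain ⟨k, u, rfl⟩ := hp
  obtain ⟨l, v, rfl⟩ := hq
  refine ⟨k + l, Fin.append u v, ?_⟩
  rw [Fin.sum_univ_add]
  simp [Fin.append_left, Fin.append_right]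

lemma isSOS_sum {ι : Type*} (s : Finset ι) (g : ι → A) (h : ∀ i ∈ s, IsSOS (g i)) :
    IsSOS (∑ i ∈ s, g i) := by
  classical
  induction s using Finset.induction_on with
  | empty => simpa using isSOS_zero
  | insert _ _ hx ih =>
    rw [Finset.sum_insert hx]
    exact sos_add (h _ (Finset.mem_insert_self _ _)) (ih fun i hi => h i (Finset.mem_insert_of_mem hi))

lemma sos_sq_mul {p : A} (q : A) (hp : IsSOS p) : IsSOS (q ^ 2 * p) := by
  obtain ⟨k, u, rfl⟩ := hp
  refine ⟨k, fun j => q * u j, ?_⟩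
  rw [Finset.mul_sum]
  simp [mul_pow]

lemma sos_mul {p r : A} (hp : IsSOS p) (hr : IsSOS r) : IsSOS (p * r) := by
  obtain ⟨k, u, rfl⟩ := hp
  rw [Finset.sum_mul]
  exact isSOS_sum _ _ fun i _ => sos_sq_mul (u i) hr

lemma isSOS_C {c : ℝ} (hc : 0 ≤ c) : IsSOS (C c : A) := by
  have : (C c : A) = (C (Real.sqrt c)) ^ 2 := by
    rw [← map_pow, Real.sq_sqrt hc]
  rw [this]; exact isSOS_sq _

/-- Quadratic-module-like set. -/
def IsQM (T : Set (MvPolynomial (Fin d) ℝ)) : Prop :=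
  (∀ p : A, p ^ 2 ∈ T) ∧ (∀ p q : A, p ∈ T → q ∈ T → p + q ∈ T) ∧
    (∀ q p : A, p ∈ T → q ^ 2 * p ∈ T)

namespace IsQM

variable {T : Set (MvPolynomial (Fin d) ℝ)} (hT : IsQM T)

include hT

lemma sq_mem (p : A) : p ^ 2 ∈ T := hT.1 p

lemma zero_mem : (0 : A) ∈ T := by simpa using hT.sq_mem 0

lemma one_mem : (1 : A) ∈ T := by simpa using hT.sq_mem 1

lemma add_mem {p q : A} (hp : p ∈ T) (hq : q ∈ T) : p + q ∈ T := hT.2.1 p q hp hq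

lemma sqmul_mem (q : A) {p : A} (hp : p ∈ T) : q ^ 2 * p ∈ T := hT.2.2 q p hp

lemma sum_mem {ι : Type*} (s : Finset ι) (g : ι → A) (h : ∀ i ∈ s, g i ∈ T) :
    (∑ i ∈ s, g i) ∈ T := by
  classical
  induction s using Finset.induction_on with
  | empty => simpa using hT.zero_mem
  | insert _ _ hx ih =>
    rw [Finset.sum_insert hx]
    exact hT.add_mem (h _ (Finset.mem_insert_self _ _))
      (ih fun i hi => h i (Finset.mem_insert_of_mem hi))

lemma sos_mem {p : A} (hp : IsSOS p) : p ∈ T := by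
  obtain ⟨k, u, rfl⟩ := hp
  exact hT.sum_mem _ _ fun i _ => hT.sq_mem (u i)

lemma sos_mul_mem {s p : A} (hs : IsSOS s) (hp : p ∈ T) : s * p ∈ T := by
  obtain ⟨k, u, rfl⟩ := hs
  rw [Finset.sum_mul]
  exact hT.sum_mem _ _ fun i _ => hT.sqmul_mem (u i) hp

lemma C_mem {c : ℝ} (hc : 0 ≤ c) : (C c : A) ∈ T := hT.sos_mem (isSOS_C hc)

lemma Cmul_mem {c : ℝ} (hc : 0 ≤ c) {p : A} (hp : p ∈ T) : C c * p ∈ T :=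
  hT.sos_mul_mem (isSOS_C hc) hp

/-- the key scalar-square bound trick. -/
lemma sq_bound {c : ℝ} (hc : 0 < c) {p : A} (h1 : C c - p ∈ T) (h2 : C c + p ∈ T) :
    C (c ^ 2) - p ^ 2 ∈ T := by
  have e : C (c ^ 2) - p ^ 2 =
      C (1 / (2 * c)) * ((C c + p) ^ 2 * (C c - p) + (C c - p) ^ 2 * (C c + p)) := by
    have h2c : (C (1 / (2 * c)) : A) * C (2 * c) = 1 := by
      rw [← map_mul, one_div, inv_mul_cancel₀ (by positivity), map_one]
    have : ((C c + p) ^ 2 * (C c - p) + (C c - p) ^ 2 * (C c + p))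
        = C (2 * c) * (C (c ^ 2) - p ^ 2) := by
      have : (C (2 * c) : A) = 2 * C c := by
        rw [map_mul, map_ofNat]
      rw [this, map_pow]; ring
    rw [this, ← mul_assoc, h2c, one_mul]
  rw [e]
  exact hT.Cmul_mem (by positivity)
    (hT.add_mem (hT.sqmul_mem _ h1) (hT.sqmul_mem _ h2))

end IsQM

lemma isQM_QM {ι : Type*} [Fintype ι] (g : ι → A) : IsQM (QM g) := by
  refine ⟨fun p => ⟨p ^ 2, 0, isSOS_sq p, fun i => isSOS_zero, by simp⟩, ?_, ?_⟩
  · rintro p q ⟨σ₀, σ, hσ₀, hσ, rfl⟩ ⟨τ₀, τ, hτ₀, hτ, rfl⟩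
    refine ⟨σ₀ + τ₀, σ + τ, sos_add hσ₀ hτ₀, fun i => sos_add (hσ i) (hτ i), ?_⟩
    simp only [Pi.add_apply, add_mul]
    rw [Finset.sum_add_distrib]; ring
  · rintro q p ⟨σ₀, σ, hσ₀, hσ, rfl⟩
    refine ⟨q ^ 2 * σ₀, fun i => q ^ 2 * σ i, sos_sq_mul q hσ₀, fun i => sos_sq_mul q (hσ i), ?_⟩
    rw [mul_add, Finset.mul_sum]
    ring_nf

lemma gen_mem_QM {ι : Type*} [Fintype ι] [DecidableEq ι] (g : ι → A) (i : ι) : g i ∈ QM g := by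
  refine ⟨0, fun j => if j = i then 1 else 0, isSOS_zero,
    fun j => by by_cases h : j = i <;> simp [h, isSOS_one, isSOS_zero], ?_⟩
  rw [zero_add, Finset.sum_congr rfl (g := fun j => if j = i then g i else 0)]
  · simp
  · intro j _
    by_cases h : j = i <;> simp [h]

/-- Extension of a quadratic module by one element. -/
def ext (T : Set (MvPolynomial (Fin d) ℝ)) (a : A) : Set (MvPolynomial (Fin d) ℝ) :=
  {p | ∃ t ∈ T, ∃ s, IsSOS s ∧ p = t + s * a}

lemma subset_ext {T : Set (MvPolynomial (Fin d) ℝ)} (hT : IsQM T) (a : A) : T ⊆ ext T a :=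
  fun p hp => ⟨p, hp, 0, isSOS_zero, by ring⟩

lemma self_mem_ext {T : Set (MvPolynomial (Fin d) ℝ)} (hT : IsQM T) (a : A) : a ∈ ext T a :=
  ⟨0, hT.zero_mem, 1, isSOS_one, by ring⟩

lemma isQM_ext {T : Set (MvPolynomial (Fin d) ℝ)} (hT : IsQM T) (a : A) : IsQM (ext T a) := by
  refine ⟨fun p => ⟨p ^ 2, hT.sq_mem p, 0, isSOS_zero, by ring⟩, ?_, ?_⟩
  · rintro p q ⟨t, ht, s, hs, rfl⟩ ⟨t', ht', s', hs', rfl⟩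
    exact ⟨t + t', hT.add_mem ht ht', s + s', sos_add hs hs', by ring⟩
  · rintro q p ⟨t, ht, s, hs, rfl⟩
    exact ⟨q ^ 2 * t, hT.sqmul_mem _ ht, q ^ 2 * s, sos_sq_mul q hs, by ring⟩

lemma neg_const {T : Set (MvPolynomial (Fin d) ℝ)} (hT : IsQM T) (hproper : (-1 : A) ∉ T)
    {c : ℝ} (hc : (C c : A) ∈ T) : 0 ≤ c := by
  by_contra h
  push_neg at h
  apply hproper
  have : (C (1 / (-c)) : A) * C c = -1 := by
    rw [← map_mul]
    have hc0 : c ≠ 0 := ne_of_lt h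
    have : 1 / (-c) * c = -1 := by field_simp
    rw [this, map_neg, map_one]
  rw [← this]
  exact hT.Cmul_mem (le_of_lt (div_pos one_pos (neg_pos.2 h))) hc


/-! ### Archimedean property -/

/-- Boundedness of an element w.r.t. a quadratic module. -/
def Bdd (T : Set (MvPolynomial (Fin d) ℝ)) (p : A) : Prop :=
  ∃ N : ℝ, 1 ≤ N ∧ C N - p ∈ T ∧ C N + p ∈ T

section Arch

variable {T : Set (MvPolynomial (Fin d) ℝ)} (hT : IsQM T)

include hT

lemma bdd_C (c : ℝ) : Bdd T (C c : A) := by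
  refine ⟨|c| + 1, by simp [abs_nonneg], ?_, ?_⟩
  · rw [← map_sub]
    exact hT.C_mem (by cases abs_cases c <;> linarith)
  · rw [← map_add]
    exact hT.C_mem (by cases abs_cases c <;> linarith)

lemma Bdd.add {p q : A} (hp : Bdd T p) (hq : Bdd T q) : Bdd T (p + q) := by
  obtain ⟨N, hN1, hN2, hN3⟩ := hp
  obtain ⟨L, hL1, hL2, hL3⟩ := hq
  refine ⟨N + L, by linarith, ?_, ?_⟩
  · have := hT.add_mem hN2 hL2
    rw [map_add]; convert this using 1; ring
  · have := hT.add_mem hN3 hL3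
    rw [map_add]; convert this using 1; ring

lemma Bdd.neg {p : A} (hp : Bdd T p) : Bdd T (-p) := by
  obtain ⟨N, hN1, hN2, hN3⟩ := hp
  refine ⟨N, hN1, by rw [sub_neg_eq_add]; exact hN3, ?_⟩
  have : C N + -p = C N - p := by ring
  rw [this]; exact hN2

lemma Bdd.sq {p : A} (hp : Bdd T p) : Bdd T (p ^ 2) := by
  obtain ⟨N, hN1, hN2, hN3⟩ := hp
  refine ⟨N ^ 2, one_le_pow₀ hN1, hT.sq_bound (by linarith) hN2 hN3, ?_⟩
  exact hT.add_mem (hT.C_mem (by positivity)) (hT.sq_mem p)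

lemma Bdd.Cmul_nonneg {c : ℝ} (hc : 0 ≤ c) {p : A} (hp : Bdd T p) : Bdd T (C c * p) := by
  obtain ⟨N, hN1, hN2, hN3⟩ := hp
  refine ⟨c * N + 1, by nlinarith, ?_, ?_⟩
  · have := hT.add_mem (hT.Cmul_mem hc hN2) hT.one_mem
    convert this using 1
    rw [map_add, map_mul, map_one]
    ring
  · have := hT.add_mem (hT.Cmul_mem hc hN3) hT.one_mem
    convert this using 1
    rw [map_add, map_mul, map_one]
    ring

lemma Bdd.Cmul (c : ℝ) {p : A} (hp : Bdd T p) : Bdd T (C c * p) := by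
  rcases le_or_gt 0 c with hc | hc
  · exact hp.Cmul_nonneg hT hc
  · have h1 : Bdd T (C (-c) * p) := hp.Cmul_nonneg hT (by linarith)
    have h2 := h1.neg hT
    have e : C c * p = -(C (-c) * p) := by rw [map_neg]; ring
    rwa [e]

lemma Bdd.mul {p q : A} (hp : Bdd T p) (hq : Bdd T q) : Bdd T (p * q) := by
  have h1 : Bdd T ((p + q) ^ 2) := (hp.add hT hq).sq hT
  have h2 : Bdd T ((p - q) ^ 2) := Bdd.sq hT (by
    have := hp.add hT (hq.neg hT)
    simpa [sub_eq_add_neg] using this)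
  have e : p * q = C (1/4) * (p + q) ^ 2 + -(C (1/4) * (p - q) ^ 2) := by
    have h4 : (C (1/4 : ℝ) : A) * C 4 = 1 := by
      rw [← map_mul]; norm_num
    have : (C (4:ℝ) : A) = 4 := by
      rw [show (4:ℝ) = ((4:ℕ):ℝ) by norm_num, map_natCast]; norm_num
    calc p * q = C (1/4) * C 4 * (p * q) := by rw [h4]; ring
    _ = C (1/4) * (p + q) ^ 2 + -(C (1/4) * (p - q) ^ 2) := by rw [this]; ring
  rw [e]
  exact (h1.Cmul hT (1/4)).add hT ((h2.Cmul hT (1/4)).neg hT)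


lemma bdd_X {ρ : ℝ} (hρ : 0 < ρ) (hgen : C ρ - normSq d ∈ T) (i : Fin d) : Bdd T (X i : A) := by
  have hsρ : (0:ℝ) < Real.sqrt ρ := Real.sqrt_pos.2 hρ
  have hCρ : (C ρ : A) = C (Real.sqrt ρ) * C (Real.sqrt ρ) := by
    rw [← map_mul, Real.mul_self_sqrt hρ.le]
  have hsplit : normSq d = X i ^ 2 + ∑ j ∈ Finset.univ.erase i, (X j : A) ^ 2 := by
    rw [normSq, ← Finset.add_sum_erase _ _ (Finset.mem_univ i)]
  have key : ∀ e : A, e = C (Real.sqrt ρ) + X i ∨ e = C (Real.sqrt ρ) - X i → e ∈ T := by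
    rintro e he
    have hrest : (∑ j ∈ Finset.univ.erase i, (X j : A) ^ 2) ∈ T :=
      hT.sum_mem _ _ fun j _ => hT.sq_mem _
    have hmem : e ^ 2 + ((C ρ - normSq d) + ∑ j ∈ Finset.univ.erase i, (X j : A) ^ 2) ∈ T :=
      hT.add_mem (hT.sq_mem e) (hT.add_mem hgen hrest)
    have heq : e ^ 2 + ((C ρ - normSq d) + ∑ j ∈ Finset.univ.erase i, (X j : A) ^ 2)
        = C (2 * Real.sqrt ρ) * e := by
      rcases he with rfl | rfl <;>
      · rw [hsplit, map_mul, map_ofNat, hCρ]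
        ring
    have hinv : (C (1 / (2 * Real.sqrt ρ)) : A) * C (2 * Real.sqrt ρ) = 1 := by
      rw [← map_mul, one_div, inv_mul_cancel₀ (by positivity), map_one]
    have : e = C (1 / (2 * Real.sqrt ρ)) * (e ^ 2 + ((C ρ - normSq d) +
        ∑ j ∈ Finset.univ.erase i, (X j : A) ^ 2)) := by
      rw [heq, ← mul_assoc, hinv, one_mul]
    rw [this]
    exact hT.Cmul_mem (by positivity) hmem
  refine ⟨Real.sqrt ρ + 1, by linarith, ?_, ?_⟩
  · have h1 : (C (Real.sqrt ρ) : A) - X i ∈ T := key _ (Or.inr rfl)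
    have := hT.add_mem h1 hT.one_mem
    convert this using 1
    rw [map_add, map_one]; ring
  · have h1 : (C (Real.sqrt ρ) : A) + X i ∈ T := key _ (Or.inl rfl)
    have := hT.add_mem h1 hT.one_mem
    convert this using 1
    rw [map_add, map_one]; ring

/-- Every polynomial is bounded w.r.t. a quadratic module containing `C ρ - normSq d`. -/
lemma bdd_all {ρ : ℝ} (hρ : 0 < ρ) (hgen : C ρ - normSq d ∈ T) (p : A) : Bdd T p := by
  induction p using MvPolynomial.induction_on with
  | C c => exact bdd_C hT c
  | add p q hp hq => exact hp.add hT hq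
  | mul_X p i hp => exact hp.mul hT (bdd_X hT hρ hgen i)

end Arch

/-! ### The key lemma: if `σ * h = 1 + s` with `s ∈ T`, `σ` SOS, then `h + ε ∈ T`. -/

section Key

variable {T : Set (MvPolynomial (Fin d) ℝ)} (hT : IsQM T)

include hT

lemma key_lemma {σ h s : A} (hσ : IsSOS σ) (hs : s ∈ T) (hrel : σ * h = 1 + s)
    {k N : ℝ} (hk1 : 1 ≤ k) (hkσ : C k - σ ∈ T) (hN : 2 ≤ N)
    (hNh1 : C N - h ∈ T) (hNh2 : C N + h ∈ T) {ε : ℝ} (hε : 0 < ε) :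
    h + C ε ∈ T := by
  have hNpos : (0:ℝ) < N := by linarith
  have hkpos : (0:ℝ) < k := by linarith
  set t : ℝ := 1 / (N * k ^ 2) with ht_def
  have htpos : 0 < t := by positivity
  have htNk : t * (N * k ^ 2) = 1 := by
    rw [ht_def]; field_simp
  have htk : t * k ≤ 1 := by
    rw [ht_def]
    rw [div_mul_eq_mul_div, one_mul, div_le_one (by positivity)]
    nlinarith
  set c₁ : ℝ := 1 - t / N with hc₁_def
  have htN1 : t / N < 1 := by
    rw [div_lt_one hNpos, ht_def]
    rw [div_lt_iff₀ (by positivity)]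
    nlinarith
  have hc₁0 : 0 < c₁ := by simp only [hc₁_def]; linarith
  have hc₁1 : c₁ < 1 := by
    simp only [hc₁_def]
    have : 0 < t / N := by positivity
    linarith
  set q : A := 1 - C t * σ with hq
  -- Nσ - 1 ∈ T
  have m1 : C N * σ - 1 ∈ T := by
    have e : C N * σ - 1 = σ * (C N - h) + s := by linear_combination hrel
    rw [e]
    exact hT.add_mem (hT.sos_mul_mem hσ hNh1) hs
  -- q ∈ T
  have m2 : q ∈ T := by
    have e : q = C t * (C k - σ) + C (1 - t * k) := by
      rw [hq, map_sub, map_mul, map_one]; ring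
    rw [e]
    exact hT.add_mem (hT.Cmul_mem htpos.le hkσ) (hT.C_mem (by linarith))
  -- c₁ - q ∈ T
  have hdiv : (C (t/N) : A) * C N = C t := by
    rw [← map_mul, div_mul_cancel₀ _ (ne_of_gt hNpos)]
  have m3 : C c₁ - q ∈ T := by
    have e : C c₁ - q = C (t/N) * (C N * σ - 1) := by
      rw [hc₁_def, hq, map_sub, map_one]
      linear_combination (-σ : MvPolynomial (Fin d) ℝ) * hdiv
    rw [e]
    exact hT.Cmul_mem (by positivity) m1
  have m4 : C c₁ + q ∈ T := hT.add_mem (hT.C_mem hc₁0.le) m2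
  have m5 : C (c₁ ^ 2) - q ^ 2 ∈ T := hT.sq_bound hc₁0 m3 m4
  have m6 : ∀ n : ℕ, C (c₁ ^ (2*n)) - q ^ (2*n) ∈ T := by
    intro n
    induction n with
    | zero => simpa using hT.zero_mem
    | succ n ih =>
      have e : C (c₁ ^ (2*(n+1))) - q ^ (2*(n+1)) =
          C (c₁ ^ 2) * (C (c₁ ^ (2*n)) - q ^ (2*n)) + (q ^ n) ^ 2 * (C (c₁ ^ 2) - q ^ 2) := by
        have h1 : c₁ ^ (2*(n+1)) = c₁ ^ 2 * c₁ ^ (2*n) := by ring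
        rw [h1, map_mul]
        ring
      rw [e]
      exact hT.add_mem (hT.Cmul_mem (by positivity) ih) (hT.sqmul_mem _ m5)
  -- k² - σ² ∈ T
  have kk : C (k ^ 2) - σ ^ 2 ∈ T :=
    hT.sq_bound hkpos hkσ (hT.add_mem (hT.C_mem hkpos.le) (hT.sos_mem hσ))
  -- σ² sos
  have hσ2 : IsSOS (σ ^ 2) := by
    rw [pow_two]; exact sos_mul hσ hσ
  have m7 : h * (1 - q ^ 2) ∈ T := by
    have e : h * (1 - q ^ 2) = C (2*t - t^2*(N*k^2)) + C (2*t) * s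
        + C (t^2) * (σ ^ 2 * (C N - h)) + C (t^2*N) * (C (k ^ 2) - σ ^ 2) := by
      rw [hq]
      simp only [map_sub, map_mul, map_pow, map_ofNat, map_one]
      linear_combination (2 * (C t : MvPolynomial (Fin d) ℝ)) * hrel
    have hconst : 2*t - t^2*(N*k^2) = t := by
      have : t^2*(N*k^2) = t := by rw [pow_two, mul_assoc, htNk, mul_one]
      linarith
    rw [e]
    refine hT.add_mem (hT.add_mem (hT.add_mem (hT.C_mem (by rw [hconst]; positivity))
      (hT.Cmul_mem (by positivity) hs)) (hT.Cmul_mem (by positivity)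
        (hT.sos_mul_mem hσ2 hNh1))) (hT.Cmul_mem (by positivity) kk)
  have m8 : ∀ n : ℕ, h - h * q ^ (2*n) ∈ T := by
    intro n
    induction n with
    | zero => simpa using hT.zero_mem
    | succ n ih =>
      have e : h - h * q ^ (2*(n+1)) = (h - h * q ^ (2*n)) + (q ^ n) ^ 2 * (h * (1 - q ^ 2)) := by
        ring
      rw [e]
      exact hT.add_mem ih (hT.sqmul_mem _ m7)
  -- choose n with N * c₁^(2n) ≤ ε
  obtain ⟨n, hn⟩ : ∃ n : ℕ, N * c₁ ^ (2*n) ≤ ε := by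
    have htend := tendsto_pow_atTop_nhds_zero_of_lt_one hc₁0.le hc₁1
    obtain ⟨n, hn⟩ := (htend.eventually (gt_mem_nhds (show (0:ℝ) < ε / N by positivity))).exists
    refine ⟨n, ?_⟩
    have h2n : c₁ ^ (2*n) ≤ c₁ ^ n := pow_le_pow_of_le_one hc₁0.le hc₁1.le (by omega)
    have : c₁ ^ n ≤ ε / N := le_of_lt hn
    calc N * c₁ ^ (2*n) ≤ N * (ε / N) := by
          apply mul_le_mul_of_nonneg_left (le_trans h2n this) hNpos.le
    _ = ε := by field_simp
  have efin : h + C ε = (h - h * q ^ (2*n)) + ((q ^ n) ^ 2 * (h + C N)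
      + (C (ε - N * c₁ ^ (2*n)) + C N * (C (c₁ ^ (2*n)) - q ^ (2*n)))) := by
    simp only [map_sub, map_mul]
    ring
  rw [efin]
  refine hT.add_mem (m8 n) (hT.add_mem (hT.sqmul_mem _ ?_) (hT.add_mem
    (hT.C_mem (by linarith)) (hT.Cmul_mem hNpos.le (m6 n))))
  have : h + C N = C N + h := by ring
  rw [this]; exact hNh2

end Key

/-! ### Support and maximal proper quadratic modules -/

def supp (T : Set (MvPolynomial (Fin d) ℝ)) : Set (MvPolynomial (Fin d) ℝ) :=
  {p | p ∈ T ∧ -p ∈ T}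

section Maximal

variable {T : Set (MvPolynomial (Fin d) ℝ)} (hT : IsQM T)

include hT

lemma supp_zero : (0 : A) ∈ supp T := ⟨hT.zero_mem, by simpa using hT.zero_mem⟩

omit hT in
lemma supp_add {p q : A} (hp : p ∈ supp T) (hq : q ∈ supp T) (hT : IsQM T) :
    p + q ∈ supp T :=
  ⟨hT.add_mem hp.1 hq.1, by rw [neg_add]; exact hT.add_mem hp.2 hq.2⟩

lemma supp_mul (x : A) {p : A} (hp : p ∈ supp T) : x * p ∈ supp T := by
  have h1 : (x + 1) ^ 2 * p ∈ supp T :=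
    ⟨hT.sqmul_mem _ hp.1, by rw [← mul_neg]; exact hT.sqmul_mem _ hp.2⟩
  have h2 : (x - 1) ^ 2 * (-p) ∈ supp T :=
    ⟨hT.sqmul_mem _ hp.2, by rw [← mul_neg, neg_neg]; exact hT.sqmul_mem _ hp.1⟩
  have hs := supp_add h1 h2 hT
  have e : x * p = C (1/4) * ((x + 1) ^ 2 * p + (x - 1) ^ 2 * (-p)) := by
    have h4 : (C (1/4 : ℝ) : A) * C 4 = 1 := by rw [← map_mul]; norm_num
    have h4' : (C (4:ℝ) : A) = 4 := by
      rw [show (4:ℝ) = ((4:ℕ):ℝ) by norm_num, map_natCast]; norm_num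
    calc x * p = C (1/4) * C 4 * (x * p) := by rw [h4]; ring
    _ = _ := by rw [h4']; ring
  rw [e]
  constructor
  · exact hT.Cmul_mem (by norm_num) hs.1
  · rw [← mul_neg]; exact hT.Cmul_mem (by norm_num) hs.2

variable (hproper : (-1 : MvPolynomial (Fin d) ℝ) ∉ T)
  (harch : ∀ p : MvPolynomial (Fin d) ℝ, Bdd T p)
  (hmax : ∀ b : MvPolynomial (Fin d) ℝ, b ∉ T → (-1 : MvPolynomial (Fin d) ℝ) ∈ ext T b)

include hproper hmax

lemma dichotomy (p : A) : p ∈ T ∨ -p ∈ T := by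
  by_contra hcon
  push_neg at hcon
  obtain ⟨h1, h2⟩ := hcon
  obtain ⟨t₁, ht₁, s₁, hs₁, he₁⟩ := hmax p h1
  obtain ⟨t₂, ht₂, s₂, hs₂, he₂⟩ := hmax (-p) h2
  have key : -(s₁ + s₂) = s₂ * t₁ + s₁ * t₂ := by
    linear_combination s₂ * he₁ + s₁ * he₂
  have hsum : -(s₁ + s₂) ∈ T := by
    rw [key]
    exact hT.add_mem (hT.sos_mul_mem hs₂ ht₁) (hT.sos_mul_mem hs₁ ht₂)
  have hns₁ : -s₁ ∈ T := by
    have := hT.add_mem hsum (hT.sos_mem hs₂)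
    have e : -s₁ = -(s₁ + s₂) + s₂ := by ring
    rwa [← e] at this
  have hsupp : s₁ ∈ supp T := ⟨hT.sos_mem hs₁, hns₁⟩
  have hps : p * s₁ ∈ supp T := supp_mul hT p hsupp
  apply hproper
  rw [he₁]
  refine hT.add_mem ht₁ ?_
  rw [show s₁ * p = p * s₁ by ring]
  exact hps.1

include harch

lemma closed_of_max {p : A} (hp : ∀ δ : ℝ, 0 < δ → p + C δ ∈ T) : p ∈ T := by
  by_contra h
  obtain ⟨t₁, ht₁, s₁, hs₁, he₁⟩ := hmax p h
  obtain ⟨k, hk1, hk2, hk3⟩ := harch s₁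
  have hkpos : (0:ℝ) < k := by linarith
  have hδ : ∀ δ : ℝ, 0 < δ → C δ * s₁ - 1 ∈ T := by
    intro δ hδ0
    have e : C δ * s₁ - 1 = t₁ + s₁ * (p + C δ) := by linear_combination he₁
    rw [e]
    exact hT.add_mem ht₁ (hT.sos_mul_mem hs₁ (hp δ hδ0))
  have hhalf : (C (-(1/2)) : A) ∈ T := by
    have h1 := hδ (1/(2*k)) (by positivity)
    have h2 := hT.Cmul_mem (show (0:ℝ) ≤ 1/(2*k) by positivity) hk2
    have hck : (C (1/(2*k)) : A) * C k = C (1/2) := by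
      rw [← map_mul]
      congr 1
      field_simp
    have hneg : (C (-(1/2)) : A) = C (1/2) - 1 := by
      rw [show (-(1/2) : ℝ) = 1/2 - 1 by norm_num, map_sub, map_one]
    have := hT.add_mem h1 h2
    have e : (C (-(1/2)) : A) = (C (1/(2*k)) * s₁ - 1) + C (1/(2*k)) * (C k - s₁) := by
      rw [hneg]
      linear_combination -hck
    rwa [← e] at this
  have := neg_const hT hproper hhalf
  norm_num at this

lemma exists_eval_point : ∃ x : Fin d → ℝ, ∀ p ∈ T, 0 ≤ eval x p := by
  classical
  have hne : ∀ p : A, {r : ℝ | C r - p ∈ T}.Nonempty := by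
    intro p
    obtain ⟨N, _, hN2, _⟩ := harch p
    exact ⟨N, hN2⟩
  have hbdd : ∀ p : A, BddBelow {r : ℝ | C r - p ∈ T} := by
    intro p
    obtain ⟨N, hN1, hN2, hN3⟩ := harch p
    refine ⟨-N, fun r hr => ?_⟩
    have hmem : (C (r + N) : A) ∈ T := by
      have := hT.add_mem hr hN3
      have e : (C (r + N) : A) = (C r - p) + (C N + p) := by rw [map_add]; ring
      rwa [← e] at this
    have := neg_const hT hproper hmem
    simp only [Set.mem_setOf_eq] at *
    linarith
  set α : MvPolynomial (Fin d) ℝ → ℝ := fun p => sInf {r : ℝ | C r - p ∈ T} with hα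
  have lem1 : ∀ p : A, C (α p) - p ∈ T := by
    intro p
    apply closed_of_max hT hproper harch hmax
    intro δ hδ0
    have hlt : sInf {r : ℝ | C r - p ∈ T} < α p + δ := by
      rw [hα]; linarith
    obtain ⟨r, hr, hrlt⟩ := exists_lt_of_csInf_lt (hne p) hlt
    have e : C (α p) - p + C δ = C ((α p + δ) - r) + (C r - p) := by
      rw [map_sub, map_add]; ring
    rw [e]
    exact hT.add_mem (hT.C_mem (by linarith)) hr
  have lem2 : ∀ p : A, p - C (α p) ∈ T := by
    intro p
    apply closed_of_max hT hproper harch hmax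
    intro δ hδ0
    have hnot : C (α p - δ) - p ∉ T := by
      intro hmem
      have : α p ≤ α p - δ := csInf_le (hbdd p) hmem
      linarith
    have hneg := (dichotomy hT hproper hmax (C (α p - δ) - p)).resolve_left hnot
    have e : p - C (α p) + C δ = -(C (α p - δ) - p) := by
      rw [map_sub]; ring
    rwa [e]
  have hsuppα : ∀ p : A, p - C (α p) ∈ supp T := by
    intro p
    exact ⟨lem2 p, by rw [neg_sub]; exact lem1 p⟩
  refine ⟨fun i => α (X i), ?_⟩
  have main : ∀ p : A, p - C (eval (fun i => α (X i)) p) ∈ supp T := by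
    intro p
    induction p using MvPolynomial.induction_on with
    | C c => simpa using supp_zero hT
    | add p q hp hq =>
      have e : (p + q) - C (eval (fun i => α (X i)) (p + q)) =
          (p - C (eval (fun i => α (X i)) p)) + (q - C (eval (fun i => α (X i)) q)) := by
        rw [map_add (eval _), map_add]
        ring
      rw [e]
      exact supp_add hp hq hT
    | mul_X p i hp =>
      have hXi : (X i : A) - C (α (X i)) ∈ supp T := hsuppα (X i)
      have e : p * X i - C (eval (fun i => α (X i)) (p * X i)) =
          X i * (p - C (eval (fun i => α (X i)) p))
            + C (eval (fun i => α (X i)) p) * (X i - C (α (X i))) := by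
        rw [map_mul (eval _), eval_X, map_mul]
        ring
      rw [e]
      exact supp_add (supp_mul hT _ hp) (supp_mul hT _ hXi) hT
  intro p hp
  have hmem : (C (eval (fun i => α (X i)) p) : A) ∈ T := by
    have h2 := (main p).2
    have := hT.add_mem hp h2
    have e : (C (eval (fun i => α (X i)) p) : A) =
        p + -(p - C (eval (fun i => α (X i)) p)) := by ring
    rwa [← e] at this
  exact neg_const hT hproper hmem

end Maximal

end SchAux


open SchAux in
theorem schweighofer_lemma (d m : ℕ) (a : Fin m → MvPolynomial (Fin d) ℝ)
    (hSbdd : Bornology.IsBounded {x : Fin d → ℝ | ∀ j, 0 ≤ eval x (a j)})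
    (ρ : ℝ) (hρ : 0 < ρ)
    (hρS : ∀ x : Fin d → ℝ, (∀ j, 0 ≤ eval x (a j)) → 0 < eval x (C ρ - normSq d))
    (f : MvPolynomial (Fin d) ℝ)
    (hf : ∀ x : Fin d → ℝ, (∀ j, 0 ≤ eval x (a j)) → 0 < eval x f) :
    f ∈ QM (Sum.elim a (fun _ : Unit => C ρ - normSq d)) := by
  classical
  set g : Fin m ⊕ Unit → MvPolynomial (Fin d) ℝ :=
    Sum.elim a (fun _ : Unit => C ρ - normSq d) with hg
  set M : Set (MvPolynomial (Fin d) ℝ) := QM g with hM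
  have hQM : IsQM M := isQM_QM g
  have hgen : C ρ - normSq d ∈ M := by
    have := gen_mem_QM g (Sum.inr ())
    simpa [hg] using this
  have harchM : ∀ p, Bdd M p := fun p => bdd_all hQM hρ hgen p
  set S : Set (Fin d → ℝ) := {x | ∀ j, 0 ≤ eval x (a j)} with hSdef
  obtain ⟨ε₀, hε₀, hSf⟩ : ∃ ε₀ : ℝ, 0 < ε₀ ∧ ∀ x ∈ S, ε₀ + ε₀ ≤ eval x f := by
    rcases Set.eq_empty_or_nonempty S with hemp | hne
    · refine ⟨1, one_pos, fun x hx => ?_⟩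
      rw [hemp] at hx
      exact absurd hx (Set.notMem_empty x)
    · have hcls : IsClosed S := by
        have : S = ⋂ j, {x : Fin d → ℝ | 0 ≤ eval x (a j)} := by
          ext x; simp [hSdef]
        rw [this]
        exact isClosed_iInter fun j =>
          isClosed_le continuous_const (MvPolynomial.continuous_eval (a j))
      have hcpt : IsCompact S := Metric.isCompact_of_isClosed_isBounded hcls hSbdd
      obtain ⟨x₀, hx₀S, hx₀min⟩ :=
        hcpt.exists_isMinOn hne (MvPolynomial.continuous_eval f).continuousOn
      refine ⟨eval x₀ f / 2, by have := hf x₀ hx₀S; linarith, fun x hx => ?_⟩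
      have hle := isMinOn_iff.1 hx₀min x hx
      linarith
  have claim : ∀ p : MvPolynomial (Fin d) ℝ,
      (∀ x : Fin d → ℝ, (∀ j, 0 ≤ eval x (a j)) → 0 < eval x p) →
      ∀ ε : ℝ, 0 < ε → p + C ε ∈ M := by
    intro p hppos ε hε
    set h : MvPolynomial (Fin d) ℝ := p + C (ε/2) with hh
    have hfin : p + C ε = h + C (ε/2) := by
      rw [hh, show (ε : ℝ) = ε/2 + ε/2 by ring, map_add]
      ring
    by_cases himp : (-1 : MvPolynomial (Fin d) ℝ) ∈ SchAux.ext M (-h)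
    · obtain ⟨t, ht, s, hsos, heq⟩ := himp
      have hrel : s * h = 1 + t := by linear_combination heq
      obtain ⟨k, hk1, hk2, hk3⟩ := harchM s
      obtain ⟨N₀, hN₀1, hN₀2, hN₀3⟩ := harchM h
      have hb1 : C (N₀ + 1) - h ∈ M := by
        have := hQM.add_mem hN₀2 hQM.one_mem
        have e : C (N₀ + 1) - h = (C N₀ - h) + 1 := by rw [map_add, map_one]; ring
        rwa [← e] at this
      have hb2 : C (N₀ + 1) + h ∈ M := by
        have := hQM.add_mem hN₀3 hQM.one_mem
        have e : C (N₀ + 1) + h = (C N₀ + h) + 1 := by rw [map_add, map_one]; ring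
        rwa [← e] at this
      have hres : h + C (ε/2) ∈ M :=
        key_lemma hQM hsos ht hrel hk1 hk2 (show (2:ℝ) ≤ N₀ + 1 by linarith)
          hb1 hb2 (by positivity)
      rw [hfin]
      exact hres
    · exfalso
      set P : Set (Set (MvPolynomial (Fin d) ℝ)) :=
        {T | IsQM T ∧ SchAux.ext M (-h) ⊆ T ∧ (-1 : MvPolynomial (Fin d) ℝ) ∉ T} with hP
      have hP1 : SchAux.ext M (-h) ∈ P := ⟨isQM_ext hQM _, subset_rfl, himp⟩
      have hchain : ∀ c ⊆ P, IsChain (· ⊆ ·) c → c.Nonempty →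
          ∃ ub ∈ P, ∀ s ∈ c, s ⊆ ub := by
        intro c hcP hch hcne
        obtain ⟨T₀, hT₀⟩ := hcne
        refine ⟨⋃₀ c, ⟨⟨?_, ?_, ?_⟩, ?_, ?_⟩, fun s hs => Set.subset_sUnion_of_mem hs⟩
        · intro q
          exact Set.mem_sUnion.2 ⟨T₀, hT₀, (hcP hT₀).1.sq_mem q⟩
        · rintro p' q' hp' hq'
          obtain ⟨T₁, hT₁, hp'⟩ := hp'
          obtain ⟨T₂, hT₂, hq'⟩ := hq'
          rcases hch.total hT₁ hT₂ with hle | hle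
          · exact Set.mem_sUnion.2 ⟨T₂, hT₂, (hcP hT₂).1.add_mem (hle hp') hq'⟩
          · exact Set.mem_sUnion.2 ⟨T₁, hT₁, (hcP hT₁).1.add_mem hp' (hle hq')⟩
        · rintro q' p' hp'
          obtain ⟨T₁, hT₁, hp'⟩ := hp'
          exact Set.mem_sUnion.2 ⟨T₁, hT₁, (hcP hT₁).1.sqmul_mem q' hp'⟩
        · exact fun p' hp' => Set.mem_sUnion.2 ⟨T₀, hT₀, (hcP hT₀).2.1 hp'⟩
        · rintro ⟨T₁, hT₁, hmem⟩
          exact (hcP hT₁).2.2 hmem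
      obtain ⟨T, hsubT, hTmax⟩ := zorn_subset_nonempty P hchain _ hP1
      obtain ⟨hTQM, hText, hTproper⟩ := hTmax.prop
      have hMT : M ⊆ T := (subset_ext hQM _).trans hText
      have harchT : ∀ q, Bdd T q := by
        intro q
        obtain ⟨N, h1, h2, h3⟩ := harchM q
        exact ⟨N, h1, hMT h2, hMT h3⟩
      have hmaxT : ∀ b, b ∉ T → (-1 : MvPolynomial (Fin d) ℝ) ∈ SchAux.ext T b := by
        intro b hb
        by_contra hcon
        have hPb : SchAux.ext T b ∈ P :=
          ⟨isQM_ext hTQM _, hText.trans (subset_ext hTQM b), hcon⟩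
        have := hTmax.2 hPb (subset_ext hTQM b)
        exact hb (this (self_mem_ext hTQM b))
      obtain ⟨x, hx⟩ := exists_eval_point hTQM hTproper harchT hmaxT
      have hxS : ∀ j, 0 ≤ eval x (a j) := by
        intro j
        apply hx
        apply hMT
        have := gen_mem_QM g (Sum.inl j)
        simpa [hg] using this
      have hxh : 0 ≤ eval x (-h) := hx _ (hText (self_mem_ext hQM (-h)))
      have hp0 := hppos x hxS
      rw [map_neg] at hxh
      have heh : eval x h = eval x p + ε/2 := by
        rw [hh, map_add, eval_C]
      linarith
  have hfS : ∀ x : Fin d → ℝ, (∀ j, 0 ≤ eval x (a j)) → 0 < eval x (f - C ε₀) := by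
    intro x hx
    have hxS : x ∈ S := hx
    have := hSf x hxS
    rw [map_sub, eval_C]
    linarith
  have hmem := claim (f - C ε₀) hfS ε₀ hε₀
  have e : f = (f - C ε₀) + C ε₀ := by ring
  rw [hM] at hmem ⊢
  rw [e]
  exact hmem
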